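/- With the setup of the enlarged-graph Lindblad operator L̃ (columns of each A_i pairwise orthogonal), let ṽ, ṽ' be vertices of the enlarged graph whose representatives v_i, v_j in G are distinct and not connected by an edge (v_j, v_i) ∉ E. Then for the Lindblad superoperator M̃(ρ) = L̃ρL̃† − (1/2){L̃†L̃, ρ}, the transition rate M̃_{ṽw̃}^{ṽ'w̃} := ⟨ṽ'| M̃(|ṽ⟩⟨w̃|) |w̃⟩ vanishes for every vertex w̃ of the enlarged graph. -/

import Mathlib

open Matrix Finset

/-- With the enlarged-graph Lindblad operator L̃ (pairwise orthogonal parent columns of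
each A_i), if ṽ = ṽ_i^k and ṽ' = ṽ_j^l have distinct representatives that are not
connected by an edge, then the transition rate
M̃_{ṽw̃}^{ṽ'w̃} = ⟨ṽ'| M̃(|ṽ⟩⟨w̃|) |w̃⟩ vanishes for every vertex w̃. -/
theorem stmt6 (n : ℕ) (E : Fin n → Fin n → Prop) [DecidableRel E]
    (indeg : Fin n → ℕ)
    (hindeg : ∀ i, indeg i = (Finset.univ.filter fun j => E j i).card)
    (A : (i : Fin n) → Matrix (Fin (max (indeg i) 1)) (Fin n) ℂ)
    (horth : ∀ (i : Fin n) (j j' : Fin n), E j i → E j' i → j ≠ j' →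
      ∑ k, star (A i k j) * A i k j' = 0)
    (hnonzero : ∀ (i : Fin n) (j : Fin n), E j i → (fun k => A i k j) ≠ 0)
    (L : Matrix ((i : Fin n) × Fin (max (indeg i) 1)) ((i : Fin n) × Fin (max (indeg i) 1)) ℂ)
    (hL : ∀ (i : Fin n) (k : Fin (max (indeg i) 1)) (j : Fin n) (l : Fin (max (indeg j) 1)),
      L ⟨i, k⟩ ⟨j, l⟩ = if E j i then A i k j else 0)
    (i j : Fin n) (k : Fin (max (indeg i) 1)) (l : Fin (max (indeg j) 1))
    (hij : i ≠ j) (hE : ¬ E i j) :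
    ∀ w : (i : Fin n) × Fin (max (indeg i) 1),
      ((L * Matrix.single (Sigma.mk i k) w 1 * Lᴴ
        - (1/2 : ℂ) • (Lᴴ * L * Matrix.single (Sigma.mk i k) w 1
            + Matrix.single (Sigma.mk i k) w 1 * (Lᴴ * L)) :
        Matrix ((i : Fin n) × Fin (max (indeg i) 1)) ((i : Fin n) × Fin (max (indeg i) 1)) ℂ))
        (Sigma.mk j l) w = 0 := by
  intro w
  have hL0 : L (Sigma.mk j l) (Sigma.mk i k) = 0 := by rw [hL]; simp [hE]
  have hne : (Sigma.mk j l : (i : Fin n) × Fin (max (indeg i) 1)) ≠ Sigma.mk i k := by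
    intro h; exact hij (congrArg Sigma.fst h).symm
  have hLL : (Lᴴ * L) (Sigma.mk j l) (Sigma.mk i k) = 0 := by
    rw [Matrix.mul_apply, ← Finset.univ_sigma_univ, Finset.sum_sigma]
    apply Finset.sum_eq_zero
    intro m _
    by_cases hjm : E j m
    · by_cases him : E i m
      · have h := horth m j i hjm him (Ne.symm hij)
        calc ∑ r, Lᴴ (Sigma.mk j l) (Sigma.mk m r) * L (Sigma.mk m r) (Sigma.mk i k)
            = ∑ r, star (A m r j) * A m r i := by
              apply Finset.sum_congr rfl; intro r _
              simp [Matrix.conjTranspose_apply, hL, hjm, him]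
          _ = 0 := h
      · apply Finset.sum_eq_zero; intro r _
        simp [hL, him]
    · apply Finset.sum_eq_zero; intro r _
      simp [Matrix.conjTranspose_apply, hL, hjm]
  have h1 : (L * Matrix.single (Sigma.mk i k) w 1 * Lᴴ : Matrix ((i : Fin n) × Fin (max (indeg i) 1)) ((i : Fin n) × Fin (max (indeg i) 1)) ℂ) (Sigma.mk j l) w = 0 := by
    rw [Matrix.mul_apply]
    apply Finset.sum_eq_zero
    intro q _
    by_cases hq : q = w
    · subst hq
      rw [Matrix.mul_single_apply_same, hL0, zero_mul, zero_mul]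
    · rw [Matrix.mul_single_apply_of_ne _ _ _ _ _ hq, zero_mul]
  have h2 : (Lᴴ * L * Matrix.single (Sigma.mk i k) w 1 : Matrix ((i : Fin n) × Fin (max (indeg i) 1)) ((i : Fin n) × Fin (max (indeg i) 1)) ℂ) (Sigma.mk j l) w = 0 := by
    rw [Matrix.mul_single_apply_same, hLL, zero_mul]
  have h3 : (Matrix.single (Sigma.mk i k) w 1 * (Lᴴ * L) : Matrix ((i : Fin n) × Fin (max (indeg i) 1)) ((i : Fin n) × Fin (max (indeg i) 1)) ℂ) (Sigma.mk j l) w = 0 :=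
    Matrix.single_mul_apply_of_ne _ _ _ _ _ hne _
  simp [Matrix.sub_apply, Matrix.smul_apply, Matrix.add_apply, h1, h2, h3]
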